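/- Let (X,d) be a nonempty locally finite ultrametric space. Then the following statements are equivalent: (1) (X,d) belongs to the class UGVL; (2) every open ball of (X,d) is a centered sphere of (X,d); (3) for every open ball B of (X,d) with at least two points there exists a point c ∈ B such that d(x,c) = diam B for every x ∈ B with x ≠ c. -/

import Mathlib

/-- `d` is an ultrametric on `X`: a nonnegative, symmetric function vanishing
exactly on the diagonal and satisfying the strong triangle inequality. -/
def IsUltrametricOn {X : Type*} (d : X → X → ℝ) : Prop :=
  (∀ x y, 0 ≤ d x y) ∧ (∀ x y, d x y = d y x) ∧
  (∀ x y, d x y = 0 ↔ x = y) ∧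
  (∀ x y z, d x y ≤ max (d x z) (d z y))

/-- `B` is an open ball of the space `(X, d)`. -/
def IsOpenBallOf {X : Type*} (d : X → X → ℝ) (B : Set X) : Prop :=
  ∃ c : X, ∃ r : ℝ, 0 < r ∧ B = {x | d c x < r}

/-- `C` is a centered sphere of the space `(X, d)`. -/
def IsCenteredSphereOf {X : Type*} (d : X → X → ℝ) (C : Set X) : Prop :=
  ∃ c ∈ C, ∃ r : ℝ, 0 ≤ r ∧ C = {x | d x c = r} ∪ {c}

/-- The diameter `sup {d x y : x, y ∈ A}` of a subset `A` of `(X, d)`. -/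
noncomputable def setDiam {X : Type*} (d : X → X → ℝ) (A : Set X) : ℝ :=
  sSup {r | ∃ x ∈ A, ∃ y ∈ A, r = d x y}

/-- A space is locally finite if all of its open balls are finite sets. -/
def IsLocallyFiniteOn {X : Type*} (d : X → X → ℝ) : Prop :=
  ∀ B : Set X, IsOpenBallOf d B → B.Finite

/-- The maximum of the (nonnegative) labels of the vertices of a walk `p`. -/
def walkMax {X : Type*} {T : SimpleGraph X} (l : X → ℝ) {u v : X} (p : T.Walk u v) : ℝ :=
  (p.support.map l).foldr max 0

/-- The function `d` is generated by the tree `T` with nonnegative vertex labeling `l`,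
i.e. `d u u = 0` and, for `u ≠ v`, `d u v` is the maximum of the labels of the vertices
on the (unique) path joining `u` and `v` in `T`. -/
def GeneratedBy {X : Type*} (d : X → X → ℝ) (T : SimpleGraph X) (l : X → ℝ) : Prop :=
  T.IsTree ∧ (∀ x, 0 ≤ l x) ∧ (∀ u, d u u = 0) ∧
  ∀ u v : X, u ≠ v → ∀ p : T.Walk u v, p.IsPath → d u v = walkMax l p

/-- `(X, d)` belongs to the class UGVL: it is generated by some labeled tree. -/
def IsUGVL {X : Type*} (d : X → X → ℝ) : Prop :=
  ∃ (T : SimpleGraph X) (l : X → ℝ), GeneratedBy d T l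


set_option linter.unusedSectionVars false
set_option maxHeartbeats 1000000

namespace Stmt14

lemma foldr_max_nonneg (L : List ℝ) : 0 ≤ L.foldr max 0 := by
  induction L with
  | nil => exact le_refl 0
  | cons a L ih => exact le_trans ih (le_max_right a _)

lemma le_foldr_max {a : ℝ} {L : List ℝ} (h : a ∈ L) : a ≤ L.foldr max 0 := by
  induction L with
  | nil => simp at h
  | cons b L ih =>
    rcases List.mem_cons.1 h with rfl | h'
    · exact le_max_left _ _
    · exact le_trans (ih h') (le_max_right _ _)

lemma foldr_max_le {c : ℝ} (hc : 0 ≤ c) {L : List ℝ} (h : ∀ a ∈ L, a ≤ c) :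
    L.foldr max 0 ≤ c := by
  induction L with
  | nil => exact hc
  | cons b L ih =>
    exact max_le (h b (List.mem_cons_self)) (ih fun a ha => h a (List.mem_cons_of_mem _ ha))

lemma foldr_max_attained (L : List ℝ) : L.foldr max 0 = 0 ∨ L.foldr max 0 ∈ L := by
  induction L with
  | nil => exact Or.inl rfl
  | cons b L ih =>
    rcases max_choice b (L.foldr max 0) with h | h
    · exact Or.inr (by rw [List.foldr_cons, h]; exact List.mem_cons_self)
    · rw [List.foldr_cons, h]
      rcases ih with h' | h'
      · exact Or.inl h'
      · exact Or.inr (List.mem_cons_of_mem _ h')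

section WM
variable {X : Type*} {T : SimpleGraph X} {l : X → ℝ}

lemma walkMax_nonneg {u v : X} (p : T.Walk u v) : 0 ≤ walkMax l p :=
  foldr_max_nonneg _

lemma le_walkMax {u v z : X} {p : T.Walk u v} (hz : z ∈ p.support) :
    l z ≤ walkMax l p :=
  le_foldr_max (List.mem_map.2 ⟨z, hz, rfl⟩)

lemma walkMax_le {u v : X} {p : T.Walk u v} {c : ℝ} (hc : 0 ≤ c)
    (h : ∀ z ∈ p.support, l z ≤ c) : walkMax l p ≤ c := by
  refine foldr_max_le hc ?_
  rintro a ha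
  obtain ⟨z, hz, rfl⟩ := List.mem_map.1 ha
  exact h z hz

lemma walkMax_cons {u v w : X} (h : T.Adj u v) (q : T.Walk v w) :
    walkMax l (SimpleGraph.Walk.cons h q) = max (l u) (walkMax l q) := by
  simp [walkMax, SimpleGraph.Walk.support_cons]

lemma walkMax_attained {u v : X} (p : T.Walk u v) :
    walkMax l p = 0 ∨ ∃ z ∈ p.support, walkMax l p = l z := by
  rcases foldr_max_attained (p.support.map l) with h | h
  · exact Or.inl h
  · obtain ⟨z, hz, hze⟩ := List.mem_map.1 h
    exact Or.inr ⟨z, hz, hze.symm⟩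

end WM

variable {X : Type*} {d : X → X → ℝ}

def cball (d : X → X → ℝ) (x : X) (r : ℝ) : Set X := {y | d x y ≤ r}

lemma mem_cball {x y : X} {r : ℝ} : y ∈ cball d x r ↔ d x y ≤ r := Iff.rfl

lemma d_self (hd : IsUltrametricOn d) (x : X) : d x x = 0 := (hd.2.2.1 x x).2 rfl

lemma self_mem_cball (hd : IsUltrametricOn d) {x : X} {r : ℝ} (hr : 0 ≤ r) :
    x ∈ cball d x r := by simp [mem_cball, d_self hd, hr]

lemma recenter (hd : IsUltrametricOn d) {x y : X} {r : ℝ} (hy : y ∈ cball d x r) :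
    cball d x r = cball d y r := by
  ext z
  simp only [mem_cball] at *
  constructor <;> intro hz
  · refine le_trans (hd.2.2.2 y z x) (max_le ?_ hz)
    rw [← hd.2.1]; exact hy
  · exact le_trans (hd.2.2.2 x z y) (max_le hy hz)

lemma cball_mono {x : X} {r s : ℝ} (h : r ≤ s) : cball d x r ⊆ cball d x s :=
  fun _ hz => le_trans hz h

lemma cball_comparable (hd : IsUltrametricOn d) {a b z : X} {r s : ℝ}
    (ha : z ∈ cball d a r) (hb : z ∈ cball d b s) :
    cball d a r ⊆ cball d b s ∨ cball d b s ⊆ cball d a r := by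
  rw [recenter hd ha, recenter hd hb]
  rcases le_total r s with h | h
  · exact Or.inl (cball_mono h)
  · exact Or.inr (cball_mono h)

lemma cball_finite (hd : IsUltrametricOn d) (hlf : IsLocallyFiniteOn d) {x : X} (r : ℝ) :
    (cball d x r).Finite := by
  rcases lt_or_ge r 0 with h | h
  · refine Set.Finite.subset (Set.finite_empty) ?_
    intro z hz
    exact absurd (lt_of_le_of_lt (mem_cball.1 hz) h) (not_lt.2 (hd.1 x z))
  · refine Set.Finite.subset (hlf {y | d x y < r + 1} ⟨x, r + 1, by linarith, rfl⟩) ?_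
    intro z hz; exact lt_of_le_of_lt (mem_cball.1 hz) (by linarith)

section Diam
variable {A : Set X}

lemma diamSet_eq : {r | ∃ x ∈ A, ∃ y ∈ A, r = d x y} = Set.image2 d A A := by
  ext r; simp [Set.mem_image2, eq_comm]

lemma diamSet_finite (hA : A.Finite) : {r | ∃ x ∈ A, ∃ y ∈ A, r = d x y}.Finite := by
  rw [diamSet_eq]; exact Set.Finite.image2 _ hA hA

lemma le_setDiam (hA : A.Finite) {x y : X} (hx : x ∈ A) (hy : y ∈ A) :
    d x y ≤ setDiam d A :=
  le_csSup (Set.Finite.bddAbove (diamSet_finite hA)) ⟨x, hx, y, hy, rfl⟩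

lemma setDiam_le {c : ℝ} (hne : A.Nonempty) (h : ∀ x ∈ A, ∀ y ∈ A, d x y ≤ c) :
    setDiam d A ≤ c := by
  refine csSup_le ?_ ?_
  · obtain ⟨a, ha⟩ := hne; exact ⟨d a a, a, ha, a, ha, rfl⟩
  · rintro r ⟨x, hx, y, hy, rfl⟩; exact h x hx y hy

lemma setDiam_nonneg (hd : IsUltrametricOn d) (hA : A.Finite) (hne : A.Nonempty) :
    0 ≤ setDiam d A := by
  obtain ⟨a, ha⟩ := hne
  have := le_setDiam (d := d) hA ha ha
  rw [d_self hd] at this; exact this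

lemma setDiam_mem (hA : A.Finite) (hne : A.Nonempty) :
    ∃ x ∈ A, ∃ y ∈ A, setDiam d A = d x y := by
  have h : setDiam d A ∈ {r | ∃ x ∈ A, ∃ y ∈ A, r = d x y} :=
    Set.Nonempty.csSup_mem
      ⟨d hne.choose hne.choose, hne.choose, hne.choose_spec, hne.choose, hne.choose_spec, rfl⟩
      (diamSet_finite hA)
  exact h

end Diam

lemma setDiam_cball_le (hd : IsUltrametricOn d) {x : X} {r : ℝ} (hr : 0 ≤ r)
    (hfin : (cball d x r).Finite) : setDiam d (cball d x r) ≤ r := by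
  refine setDiam_le ⟨x, self_mem_cball hd hr⟩ ?_
  intro a ha b hb
  refine le_trans (hd.2.2.2 a b x) (max_le ?_ (mem_cball.1 hb))
  rw [← hd.2.1]; exact ha

lemma cball_eq_diam (hd : IsUltrametricOn d) {x z : X} {r : ℝ} (hr : 0 ≤ r)
    (hfin : (cball d x r).Finite) (hz : z ∈ cball d x r) :
    cball d x r = cball d z (setDiam d (cball d x r)) := by
  ext w
  constructor
  · intro hw; exact le_setDiam hfin hz hw
  · intro hw
    have : w ∈ cball d z r := le_trans (mem_cball.1 hw) (setDiam_cball_le hd hr hfin)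
    rwa [← recenter hd hz] at this

lemma cball_isOpenBall (hd : IsUltrametricOn d) (hlf : IsLocallyFiniteOn d)
    {x : X} {r : ℝ} (hr : 0 ≤ r) : IsOpenBallOf d (cball d x r) := by
  classical
  have hfin := cball_finite hd hlf (x := x) (r + 1)
  set S : Set ℝ := {s | (∃ y, d x y = s) ∧ r < s ∧ s ≤ r + 1} with hS
  have hSfin : S.Finite := by
    refine Set.Finite.subset (Set.Finite.image (d x) hfin) ?_
    rintro s ⟨⟨y, rfl⟩, h1, h2⟩; exact ⟨y, h2, rfl⟩
  by_cases hSne : S.Nonempty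
  · have hmem := Set.Nonempty.csInf_mem hSne hSfin
    refine ⟨x, sInf S, lt_of_le_of_lt hr hmem.2.1, ?_⟩
    ext z
    simp only [mem_cball, Set.mem_setOf_eq]
    constructor
    · intro hz
      exact lt_of_le_of_lt hz hmem.2.1
    · intro hz
      by_contra hlt
      push_neg at hlt
      have : d x z ∈ S := ⟨⟨z, rfl⟩, hlt, le_trans (le_of_lt hz) hmem.2.2⟩
      exact absurd (csInf_le (Set.Finite.bddBelow hSfin) this) (not_le.2 hz)
  · refine ⟨x, r + 1, by linarith, ?_⟩
    ext z
    simp only [mem_cball, Set.mem_setOf_eq]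
    constructor
    · intro hz; linarith
    · intro hz
      by_contra hlt
      push_neg at hlt
      exact hSne ⟨d x z, ⟨z, rfl⟩, hlt, le_of_lt hz⟩

end Stmt14

section Equiv23
variable {X : Type*} {d : X → X → ℝ}
open Stmt14

lemma openBall_finite (hlf : IsLocallyFiniteOn d) {B : Set X} (hB : IsOpenBallOf d B) :
    B.Finite := hlf B hB

lemma two_to_three (hd : IsUltrametricOn d) (hlf : IsLocallyFiniteOn d)
    (h2 : ∀ B : Set X, IsOpenBallOf d B → IsCenteredSphereOf d B) :
    ∀ B : Set X, IsOpenBallOf d B → (∃ a ∈ B, ∃ b ∈ B, a ≠ b) →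
      ∃ c ∈ B, ∀ x ∈ B, x ≠ c → d x c = setDiam d B := by
  intro B hB ⟨a, ha, b, hb, hab⟩
  obtain ⟨c, hc, r, hr, hBeq⟩ := h2 B hB
  have hfin : B.Finite := hlf B hB
  have hsph : ∀ x ∈ B, x ≠ c → d x c = r := by
    intro x hx hxc
    rw [hBeq] at hx
    rcases hx with hx | hx
    · exact hx
    · exact absurd hx hxc
  -- r = setDiam d B
  have hrd : r = setDiam d B := by
    have h1 : r ≤ setDiam d B := by
      rcases eq_or_ne a c with rfl | hac
      · rw [← hsph b hb (by rintro rfl; exact hab rfl)]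
        exact le_setDiam hfin hb hc
      · rw [← hsph a ha hac]
        exact le_setDiam hfin ha hc
    have h2' : setDiam d B ≤ r := by
      refine setDiam_le ⟨c, hc⟩ ?_
      intro x hx y hy
      have hxc : d x c ≤ r := by
        rcases eq_or_ne x c with rfl | hxc
        · rw [d_self hd]; exact hr
        · exact le_of_eq (hsph x hx hxc)
      have hyc : d c y ≤ r := by
        rcases eq_or_ne y c with rfl | hyc
        · rw [d_self hd]; exact hr
        · rw [hd.2.1]; exact le_of_eq (hsph y hy hyc)
      exact le_trans (hd.2.2.2 x y c) (max_le hxc hyc)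
    linarith
  exact ⟨c, hc, fun x hx hxc => by rw [hsph x hx hxc, hrd]⟩

lemma three_to_two (hd : IsUltrametricOn d) (hlf : IsLocallyFiniteOn d)
    (h3 : ∀ B : Set X, IsOpenBallOf d B → (∃ a ∈ B, ∃ b ∈ B, a ≠ b) →
      ∃ c ∈ B, ∀ x ∈ B, x ≠ c → d x c = setDiam d B) :
    ∀ B : Set X, IsOpenBallOf d B → IsCenteredSphereOf d B := by
  intro B hB
  obtain ⟨c₀, r₀, hr₀, hBeq⟩ := id hB
  have hc₀ : c₀ ∈ B := by rw [hBeq]; simpa [Set.mem_setOf_eq, d_self hd] using hr₀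
  have hfin : B.Finite := hlf B hB
  by_cases htwo : ∃ a ∈ B, ∃ b ∈ B, a ≠ b
  · obtain ⟨c, hc, hspec⟩ := h3 B hB htwo
    refine ⟨c, hc, setDiam d B, setDiam_nonneg hd hfin ⟨c, hc⟩, ?_⟩
    have hDlt : setDiam d B < r₀ := by
      obtain ⟨x, hx, y, hy, hxy⟩ := setDiam_mem hfin ⟨c, hc⟩
      rw [hxy]
      have hx' : d c₀ x < r₀ := by rw [hBeq] at hx; exact hx
      have hy' : d c₀ y < r₀ := by rw [hBeq] at hy; exact hy
      refine lt_of_le_of_lt (hd.2.2.2 x y c₀) (max_lt ?_ hy')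
      rw [← hd.2.1]; exact hx'
    ext z
    constructor
    · intro hz
      rcases eq_or_ne z c with rfl | hzc
      · exact Or.inr rfl
      · exact Or.inl (hspec z hz hzc)
    · intro hz
      rcases hz with hz | hz
      · have hzc : d z c = setDiam d B := hz
        have hcB : d c₀ c < r₀ := by rw [hBeq] at hc; exact hc
        rw [hBeq]
        show d c₀ z < r₀
        refine lt_of_le_of_lt (hd.2.2.2 c₀ z c) (max_lt hcB ?_)
        rw [hd.2.1]
        exact lt_of_le_of_lt (le_of_eq hzc) hDlt
      · rw [Set.mem_singleton_iff] at hz; subst hz; exact hc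
  · push_neg at htwo
    have hBsing : B = {c₀} := by
      ext z
      constructor
      · intro hz
        by_contra hne
        exact hne (htwo z hz c₀ hc₀)
      · intro hz; rw [Set.mem_singleton_iff] at hz; subst hz; exact hc₀
    refine ⟨c₀, hc₀, 0, le_refl 0, ?_⟩
    rw [hBsing]
    ext z
    simp only [Set.mem_union, Set.mem_setOf_eq, Set.mem_singleton_iff]
    constructor
    · intro hz; exact Or.inr hz
    · rintro (hz | hz)
      · exact (hd.2.2.1 z c₀).1 hz
      · exact hz
end Equiv23

namespace Stmt14

open scoped Classical
set_option linter.unusedSectionVars false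

structure Good {X : Type*} (d : X → X → ℝ) : Prop where
  hd : IsUltrametricOn d
  hlf : IsLocallyFiniteOn d
  h3 : ∀ B : Set X, IsOpenBallOf d B → (∃ a ∈ B, ∃ b ∈ B, a ≠ b) →
    ∃ c ∈ B, ∀ x ∈ B, x ≠ c → d x c = setDiam d B

variable {X : Type*} [Nonempty X] {d : X → X → ℝ}

def ctrP (d : X → X → ℝ) (B : Set X) : Prop :=
  ∃ c ∈ B, ∀ x ∈ B, x ≠ c → d x c = setDiam d B

noncomputable def ctr (d : X → X → ℝ) [Nonempty X] (B : Set X) : X :=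
  if h : ctrP d B then h.choose else Classical.arbitrary X

lemma ctr_mem {B : Set X} (h : ctrP d B) : ctr d B ∈ B := by
  rw [ctr, dif_pos h]; exact h.choose_spec.1

lemma ctr_spec {B : Set X} (h : ctrP d B) :
    ∀ x ∈ B, x ≠ ctr d B → d x (ctr d B) = setDiam d B := by
  rw [ctr, dif_pos h]; exact h.choose_spec.2

lemma ctrP_ball (C : Good d) (x : X) {r : ℝ} (hr : 0 ≤ r) : ctrP d (cball d x r) := by
  by_cases htwo : ∃ a ∈ cball d x r, ∃ b ∈ cball d x r, a ≠ b
  · exact C.h3 _ (cball_isOpenBall C.hd C.hlf hr) htwo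
  · push_neg at htwo
    refine ⟨x, self_mem_cball C.hd hr, ?_⟩
    intro y hy hyx
    exact absurd (htwo y hy x (self_mem_cball C.hd hr)) hyx

/-- uniqueness: two multipoint balls around `x` with the same center coincide -/
lemma ball_unique_aux (C : Good d) {x : X} {r s : ℝ} (hr : 0 ≤ r) (hs : 0 ≤ s)
    (hc : ctr d (cball d x r) = ctr d (cball d x s))
    (hr2 : ∃ w ∈ cball d x r, w ≠ ctr d (cball d x r))
    (hsub : cball d x r ⊆ cball d x s) :
    cball d x r = cball d x s := by
  have hPr := ctrP_ball C x hr
  have hPs := ctrP_ball C x hs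
  have hfr := cball_finite C.hd C.hlf (x := x) r
  have hfs := cball_finite C.hd C.hlf (x := x) s
  obtain ⟨w, hw, hwne⟩ := hr2
  have h1 : d w (ctr d (cball d x r)) = setDiam d (cball d x r) := ctr_spec hPr w hw hwne
  have h2 : d w (ctr d (cball d x s)) = setDiam d (cball d x s) := by
    refine ctr_spec hPs w (hsub hw) ?_
    rw [← hc]; exact hwne
  rw [hc] at h1
  have hsd : setDiam d (cball d x r) = setDiam d (cball d x s) := by rw [← h1, ← h2]
  have e1 : cball d x r = cball d (ctr d (cball d x s)) (setDiam d (cball d x r)) := by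
    conv_lhs => rw [cball_eq_diam C.hd hr hfr (z := ctr d (cball d x s)) (by rw [← hc]; exact ctr_mem hPr)]
  have e2 : cball d x s = cball d (ctr d (cball d x s)) (setDiam d (cball d x s)) := by
    conv_lhs => rw [cball_eq_diam C.hd hs hfs (z := ctr d (cball d x s)) (ctr_mem hPs)]
  rw [hsd] at e1
  exact e1.trans e2.symm

lemma ball_unique (C : Good d) {x : X} {r s : ℝ} (hr : 0 ≤ r) (hs : 0 ≤ s)
    (hc : ctr d (cball d x r) = ctr d (cball d x s))
    (hr2 : ∃ w ∈ cball d x r, w ≠ ctr d (cball d x r))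
    (hs2 : ∃ w ∈ cball d x s, w ≠ ctr d (cball d x s)) :
    cball d x r = cball d x s := by
  rcases cball_comparable C.hd (self_mem_cball C.hd hr) (self_mem_cball C.hd hs) with h | h
  · exact ball_unique_aux C hr hs hc hr2 h
  · exact (ball_unique_aux C hs hr hc.symm hs2 h).symm

/-- reduce a ball's radius to an attained distance -/
lemma cball_reduce (C : Good d) {x : X} {r : ℝ} (hr : 0 ≤ r) :
    ∃ m, (∃ y, d x y = m) ∧ 0 ≤ m ∧ m ≤ r ∧ cball d x m = cball d x r := by
  have hfin := cball_finite C.hd C.hlf (x := x) r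
  set S := (d x) '' (cball d x r) with hS
  have hSfin : S.Finite := Set.Finite.image _ hfin
  have hSne : S.Nonempty := ⟨d x x, x, self_mem_cball C.hd hr, rfl⟩
  have hmem := Set.Nonempty.csSup_mem hSne hSfin
  obtain ⟨y₀, hy₀, hy₀e⟩ := hmem
  refine ⟨sSup S, ⟨y₀, hy₀e⟩, ?_, ?_, ?_⟩
  · rw [← hy₀e]; exact C.hd.1 x y₀
  · rw [← hy₀e]; exact hy₀
  · ext z
    constructor
    · intro hz
      exact le_trans (mem_cball.1 hz) (by rw [← hy₀e]; exact hy₀)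
    · intro hz
      exact le_csSup (Set.Finite.bddAbove hSfin) ⟨z, hz, rfl⟩

def nonRoot (d : X → X → ℝ) [Nonempty X] (x : X) : Prop :=
  ∃ s, (∃ y, d x y = s) ∧ ctr d (cball d x s) ≠ x

noncomputable def mrad (d : X → X → ℝ) [Nonempty X] (x : X) : ℝ :=
  if h : nonRoot d x then
    sInf {s | (∃ y, d x y = s) ∧ ctr d (cball d x s) ≠ x ∧ s ≤ h.choose}
  else 0

lemma mrad_spec (C : Good d) {x : X} (hx : nonRoot d x) :
    (∃ y, d x y = mrad d x) ∧ ctr d (cball d x (mrad d x)) ≠ x := by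
  rw [mrad, dif_pos hx]
  have h1 : hx.choose ∈ {s | (∃ y, d x y = s) ∧ ctr d (cball d x s) ≠ x ∧ s ≤ hx.choose} :=
    ⟨hx.choose_spec.1, hx.choose_spec.2, le_refl _⟩
  have hfin : {s | (∃ y, d x y = s) ∧ ctr d (cball d x s) ≠ x ∧ s ≤ hx.choose}.Finite := by
    refine Set.Finite.subset (Set.Finite.image (d x)
      (cball_finite C.hd C.hlf (x := x) hx.choose)) ?_
    rintro t ⟨⟨y, rfl⟩, -, hle⟩
    exact ⟨y, hle, rfl⟩
  have := Set.Nonempty.csInf_mem ⟨_, h1⟩ hfin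
  exact ⟨this.1, this.2.1⟩

lemma mrad_nonneg (C : Good d) {x : X} (hx : nonRoot d x) : 0 ≤ mrad d x := by
  obtain ⟨y, hy⟩ := (mrad_spec C hx).1
  rw [← hy]; exact C.hd.1 x y

lemma mrad_le (C : Good d) {x : X} (hx : nonRoot d x) {s : ℝ}
    (h1 : ∃ y, d x y = s) (h2 : ctr d (cball d x s) ≠ x) : mrad d x ≤ s := by
  rw [mrad, dif_pos hx]
  have hfin : {s | (∃ y, d x y = s) ∧ ctr d (cball d x s) ≠ x ∧ s ≤ hx.choose}.Finite := by
    refine Set.Finite.subset (Set.Finite.image (d x)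
      (cball_finite C.hd C.hlf (x := x) hx.choose)) ?_
    rintro t ⟨⟨y, rfl⟩, -, hle⟩
    exact ⟨y, hle, rfl⟩
  rcases le_total s hx.choose with hle | hle
  · exact csInf_le (Set.Finite.bddBelow hfin) ⟨h1, h2, hle⟩
  · exact le_trans (csInf_le (Set.Finite.bddBelow hfin)
      ⟨hx.choose_spec.1, hx.choose_spec.2, le_refl _⟩) hle

def Bmin (d : X → X → ℝ) [Nonempty X] (x : X) : Set X := cball d x (mrad d x)

lemma Bmin_mem (C : Good d) {x : X} (hx : nonRoot d x) : x ∈ Bmin d x :=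
  self_mem_cball C.hd (mrad_nonneg C hx)

lemma Bmin_ctr_ne (C : Good d) {x : X} (hx : nonRoot d x) : ctr d (Bmin d x) ≠ x :=
  (mrad_spec C hx).2

lemma Bmin_ctrP (C : Good d) {x : X} (hx : nonRoot d x) : ctrP d (Bmin d x) :=
  ctrP_ball C x (mrad_nonneg C hx)

lemma Bmin_finite (C : Good d) (x : X) : (Bmin d x).Finite :=
  cball_finite C.hd C.hlf _

lemma nonRoot_of (C : Good d) {x b : X} {r : ℝ} (hr : 0 ≤ r) (hx : x ∈ cball d b r)
    (hc : ctr d (cball d b r) ≠ x) : nonRoot d x := by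
  rw [recenter C.hd hx] at hc
  obtain ⟨m, hm1, hm0, hmr, hme⟩ := cball_reduce C (x := x) hr
  exact ⟨m, hm1, by rwa [hme]⟩

lemma Bmin_subset (C : Good d) {x b : X} {r : ℝ} (hr : 0 ≤ r) (hx : x ∈ cball d b r)
    (hc : ctr d (cball d b r) ≠ x) : Bmin d x ⊆ cball d b r := by
  have hnr : nonRoot d x := nonRoot_of C hr hx hc
  rw [recenter C.hd hx] at hc ⊢
  obtain ⟨m, hm1, hm0, hmr, hme⟩ := cball_reduce C (x := x) hr
  have : mrad d x ≤ m := mrad_le C hnr hm1 (by rwa [hme])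
  rw [← hme]
  exact cball_mono this

noncomputable def par (d : X → X → ℝ) [Nonempty X] (x : X) : X :=
  if h : nonRoot d x then ctr d (Bmin d x) else x

lemma par_def {x : X} (hx : nonRoot d x) : par d x = ctr d (Bmin d x) := dif_pos hx

lemma par_eq {x : X} (hx : ¬ nonRoot d x) : par d x = x := dif_neg hx

lemma par_ne (C : Good d) {x : X} (hx : nonRoot d x) : par d x ≠ x := by
  rw [par_def hx]; exact Bmin_ctr_ne C hx

lemma nonRoot_of_par_ne {x : X} (h : par d x ≠ x) : nonRoot d x := by
  by_contra hc; exact h (par_eq hc)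

lemma par_mem (C : Good d) {x : X} (hx : nonRoot d x) : par d x ∈ Bmin d x := by
  rw [par_def hx]; exact ctr_mem (Bmin_ctrP C hx)

lemma d_par (C : Good d) {x : X} (hx : nonRoot d x) :
    d x (par d x) = setDiam d (Bmin d x) := by
  rw [par_def hx]
  exact ctr_spec (Bmin_ctrP C hx) x (Bmin_mem C hx) (Ne.symm (Bmin_ctr_ne C hx))

/-- key: the minimal ball of the parent strictly contains the minimal ball of `x` -/
lemma Bmin_ssubset (C : Good d) {x : X} (hx : nonRoot d x) (hpx : nonRoot d (par d x)) :
    Bmin d x ⊂ Bmin d (par d x) := by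
  set z := par d x with hz
  have hzB : z ∈ Bmin d x := par_mem C hx
  have hzz : z ∈ Bmin d z := Bmin_mem C hpx
  have hctr_x : ctr d (Bmin d x) = z := (par_def hx).symm
  have hctr_z : ctr d (Bmin d z) ≠ z := Bmin_ctr_ne C hpx
  have hsub_or := cball_comparable C.hd (r := mrad d x) (s := mrad d z) hzB hzz
  have hne : Bmin d x ≠ Bmin d z := fun h => hctr_z (by rw [← h, hctr_x])
  rcases hsub_or with h | h
  · exact ssubset_of_subset_of_ne h hne
  · -- Bmin z ⊆ Bmin x : derive contradiction
    exfalso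
    set w := ctr d (Bmin d z) with hw
    have hwB : w ∈ Bmin d z := ctr_mem (Bmin_ctrP C hpx)
    have hwx : w ∈ Bmin d x := h hwB
    have hwz : d w z = setDiam d (Bmin d x) := by
      rw [← hctr_x]
      exact ctr_spec (Bmin_ctrP C hx) w hwx (by rw [hctr_x]; exact hctr_z)
    -- Bmin x ⊆ Bmin z
    have hsub2 : Bmin d x ⊆ Bmin d z := by
      intro u hu
      have hu' : d z u ≤ setDiam d (Bmin d x) := by
        have := cball_eq_diam C.hd (mrad_nonneg C hx) (Bmin_finite C x) hzB
        rw [Bmin] at hu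
        rw [this] at hu
        exact mem_cball.1 hu
      have hzw : d z w ≤ mrad d z := mem_cball.1 hwB
      have : d z u ≤ mrad d z := le_trans hu' (by rw [← hwz, C.hd.2.1 w z]; exact hzw)
      exact this
    exact hne (Set.Subset.antisymm hsub2 h)

/-- The tree graph -/
noncomputable def TT (d : X → X → ℝ) [Nonempty X] : SimpleGraph X where
  Adj a b := a ≠ b ∧ (par d a = b ∨ par d b = a)
  symm := by
    refine ⟨?_⟩
    rintro a b ⟨h1, h2⟩
    exact ⟨h1.symm, h2.symm⟩
  loopless := ⟨by rintro a ⟨h1, -⟩; exact h1 rfl⟩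

lemma adj_iff {a b : X} : (TT d).Adj a b ↔ a ≠ b ∧ (par d a = b ∨ par d b = a) := Iff.rfl

lemma no_mutual (C : Good d) {a b : X} (hab : a ≠ b) (h1 : par d a = b) (h2 : par d b = a) :
    False := by
  have hna : nonRoot d a := nonRoot_of_par_ne (by rw [h1]; exact hab.symm)
  have hnb : nonRoot d b := nonRoot_of_par_ne (by rw [h2]; exact hab)
  have s1 : Bmin d a ⊂ Bmin d b := by
    have := Bmin_ssubset C hna (by rw [h1]; exact hnb)
    rwa [h1] at this
  have s2 : Bmin d b ⊂ Bmin d a := by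
    have := Bmin_ssubset C hnb (by rw [h2]; exact hna)
    rwa [h2] at this
  exact ssubset_irrefl _ (s1.trans s2)

lemma adj_dichotomy (C : Good d) {a b : X} (h : (TT d).Adj a b) :
    (par d a = b ∧ par d b ≠ a) ∨ (par d b = a ∧ par d a ≠ b) := by
  obtain ⟨hne, h2⟩ := h
  rcases h2 with h2 | h2
  · exact Or.inl ⟨h2, fun hc => no_mutual C hne h2 hc⟩
  · exact Or.inr ⟨h2, fun hc => no_mutual C hne hc h2⟩

/-- all steps of the walk are "down" steps (towards children) -/
def AllDown (d : X → X → ℝ) [Nonempty X] : ∀ {a b : X}, (TT d).Walk a b → Prop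
  | _, _, SimpleGraph.Walk.nil => True
  | _, _, @SimpleGraph.Walk.cons _ _ a b' _ _ q => par d b' = a ∧ AllDown d q

lemma allDown_cons {a b c : X} (h : (TT d).Adj a b) (q : (TT d).Walk b c) :
    AllDown d (SimpleGraph.Walk.cons h q) ↔ par d b = a ∧ AllDown d q := Iff.rfl

/-- if the first step of a path is a down step, so are all the others -/
lemma allDown_of_first (C : Good d) : ∀ {b c : X} (q : (TT d).Walk b c) {a : X}
    (h : (TT d).Adj a b), (SimpleGraph.Walk.cons h q).IsPath → par d b = a → AllDown d q := by
  intro b c q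
  induction q with
  | nil => intro a h hp hd; trivial
  | @cons b v c h' q' ih =>
    intro a h hp hpar
    have hp' : (SimpleGraph.Walk.cons h' q').IsPath := hp.of_cons
    rcases adj_dichotomy C h' with ⟨hdn, -⟩ | ⟨hup, -⟩
    · -- par b = v : the next step is "up", contradiction
      exfalso
      have hav : a = v := by rw [← hpar, hdn]
      have : a ∈ (SimpleGraph.Walk.cons h' q').support := by
        rw [SimpleGraph.Walk.support_cons]
        exact List.mem_cons_of_mem _ (hav ▸ q'.start_mem_support)
      exact ((SimpleGraph.Walk.cons_isPath_iff h _).1 hp).2 this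
    · exact ⟨hup, ih h' hp' hup⟩

/-- walking down strictly decreases the minimal ball -/
lemma chain_down (C : Good d) : ∀ {a b : X} (q : (TT d).Walk a b), AllDown d q →
    nonRoot d a → 1 ≤ q.length → nonRoot d b ∧ Bmin d b ⊂ Bmin d a := by
  intro a b q
  induction q with
  | nil => intro _ _ h; simp at h
  | @cons a v b h q' ih =>
    intro hAD hna _
    obtain ⟨hpar, hAD'⟩ := (allDown_cons h q').1 hAD
    have hnv : nonRoot d v := nonRoot_of_par_ne (by rw [hpar]; exact h.1)
    have hss : Bmin d v ⊂ Bmin d a := by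
      have := Bmin_ssubset C hnv (by rw [hpar]; exact hna)
      rwa [hpar] at this
    rcases Nat.eq_zero_or_pos q'.length with h0 | h1
    · have hvb : v = b := q'.eq_of_length_eq_zero h0
      subst hvb
      exact ⟨hnv, hss⟩
    · obtain ⟨hnb, hss'⟩ := ih hAD' hnv h1
      exact ⟨hnb, hss'.trans hss⟩

open SimpleGraph Walk in
lemma no_cycle_aux (C : Good d) {α β : X} (h : (TT d).Adj α β) (q : (TT d).Walk β α)
    (hcyc : (Walk.cons h q).IsCycle) (hpar : par d β = α) : False := by
  obtain ⟨hq_path, hnotin⟩ := (Walk.cons_isCycle_iff q h).1 hcyc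
  have hlen : 2 ≤ q.length := by
    have := hcyc.three_le_length
    rw [Walk.length_cons] at this
    omega
  cases q with
  | nil => simp at hlen
  | @cons _ γ _ h₁ q₁ =>
    have hγβ : par d γ = β := by
      rcases adj_dichotomy C h₁ with ⟨hdn, -⟩ | ⟨hup, -⟩
      · exfalso
        have hγα : γ = α := by rw [← hdn, hpar]
        subst hγα
        apply hnotin
        rw [Walk.edges_cons, Sym2.eq_swap]
        exact List.mem_cons_self
      · exact hup
    have hAD : AllDown d (Walk.cons h₁ q₁) := ⟨hγβ, allDown_of_first C q₁ h₁ hq_path hγβ⟩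
    have hnβ : nonRoot d β := nonRoot_of_par_ne (by rw [hpar]; exact h.1)
    obtain ⟨hnα, hss1⟩ := chain_down C (Walk.cons h₁ q₁) hAD hnβ (by rw [Walk.length_cons]; omega)
    have hss2 : Bmin d β ⊂ Bmin d α := by
      have := Bmin_ssubset C hnβ (by rw [hpar]; exact hnα)
      rwa [hpar] at this
    exact ssubset_irrefl _ (hss1.trans hss2)

open SimpleGraph Walk in
lemma TT_acyclic (C : Good d) : (TT d).IsAcyclic := by
  intro v c hcyc
  cases c with
  | nil =>
    have := hcyc.three_le_length
    simp at this
  | @cons _ w _ h q =>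
    rcases adj_dichotomy C h with ⟨hup, -⟩ | ⟨hdn, -⟩
    · obtain ⟨hq_path, hnotin⟩ := (Walk.cons_isCycle_iff q h).1 hcyc
      have hcyc2 : (Walk.cons h.symm q.reverse).IsCycle := by
        rw [Walk.cons_isCycle_iff]
        refine ⟨hq_path.reverse, ?_⟩
        rw [Walk.edges_reverse, List.mem_reverse, Sym2.eq_swap]
        exact hnotin
      exact no_cycle_aux C h.symm q.reverse hcyc2 hup
    · exact no_cycle_aux C h q hcyc hdn

open SimpleGraph Walk in
lemma reach (C : Good d) : ∀ (n : ℕ) {x b : X} {r : ℝ}, 0 ≤ r → x ∈ cball d b r →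
    ctr d (cball d b r) ≠ x → (cball d b r).ncard - (Bmin d x).ncard ≤ n →
    ∃ w : (TT d).Walk x (ctr d (cball d b r)), ∀ z ∈ w.support, z ∈ cball d b r := by
  intro n
  induction n using Nat.strong_induction_on with
  | _ n ih =>
    intro x b r hr hx hcx hn
    have hnr : nonRoot d x := nonRoot_of C hr hx hcx
    have hBsub : Bmin d x ⊆ cball d b r := Bmin_subset C hr hx hcx
    have hadj : (TT d).Adj x (par d x) := ⟨Ne.symm (par_ne C hnr), Or.inl rfl⟩
    have hpx_mem : par d x ∈ cball d b r := hBsub (par_mem C hnr)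
    by_cases hceq : par d x = ctr d (cball d b r)
    · rw [← hceq]
      refine ⟨Walk.cons hadj Walk.nil, ?_⟩
      intro z hz
      rw [Walk.support_cons, Walk.support_nil] at hz
      rcases List.mem_cons.1 hz with rfl | hz'
      · exact hx
      · rw [List.mem_singleton] at hz'
        subst hz'
        exact hpx_mem
    · have hcx' : ctr d (cball d b r) ≠ par d x := fun hc => hceq hc.symm
      have hnpx : nonRoot d (par d x) := nonRoot_of C hr hpx_mem hcx'
      have hss := Bmin_ssubset C hnr hnpx
      have hsub' : Bmin d (par d x) ⊆ cball d b r := Bmin_subset C hr hpx_mem hcx'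
      have hfinB : (cball d b r).Finite := cball_finite C.hd C.hlf _
      have hlt : (cball d b r).ncard - (Bmin d (par d x)).ncard
          < (cball d b r).ncard - (Bmin d x).ncard := by
        have h1 : (Bmin d x).ncard < (Bmin d (par d x)).ncard :=
          Set.ncard_lt_ncard hss (hfinB.subset hsub')
        have h2 : (Bmin d (par d x)).ncard ≤ (cball d b r).ncard :=
          Set.ncard_le_ncard hsub' hfinB
        omega
      obtain ⟨w', hw'⟩ := ih _ (lt_of_lt_of_le hlt hn) hr hpx_mem hcx' (le_refl _)
      refine ⟨Walk.cons hadj w', ?_⟩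
      intro z hz
      rw [Walk.support_cons] at hz
      rcases List.mem_cons.1 hz with rfl | hz'
      · exact hx
      · exact hw' z hz'

open SimpleGraph Walk in
lemma walk_in_ball (C : Good d) {u v : X} (huv : u ≠ v) :
    ∃ w : (TT d).Walk u v, ∀ z ∈ w.support, z ∈ cball d u (d u v) := by
  have hr : 0 ≤ d u v := C.hd.1 u v
  have hu : u ∈ cball d u (d u v) := self_mem_cball C.hd hr
  have hv : v ∈ cball d u (d u v) := mem_cball.2 (le_refl _)
  have get : ∀ x : X, x ∈ cball d u (d u v) →
      ∃ w : (TT d).Walk x (ctr d (cball d u (d u v))),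
        ∀ z ∈ w.support, z ∈ cball d u (d u v) := by
    intro x hxm
    by_cases hcx : ctr d (cball d u (d u v)) = x
    · subst hcx
      refine ⟨Walk.nil, ?_⟩
      intro z hz
      rw [Walk.support_nil, List.mem_singleton] at hz
      subst hz
      exact hxm
    · exact reach C ((cball d u (d u v)).ncard) hr hxm hcx (Nat.sub_le _ _)
  obtain ⟨w1, hw1⟩ := get u hu
  obtain ⟨w2, hw2⟩ := get v hv
  refine ⟨w1.append w2.reverse, ?_⟩
  intro z hz
  rw [Walk.support_append] at hz
  rcases List.mem_append.1 hz with hz' | hz'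
  · exact hw1 z hz'
  · have : z ∈ w2.reverse.support := List.mem_of_mem_tail hz'
    rw [Walk.support_reverse, List.mem_reverse] at this
    exact hw2 z this

lemma TT_connected (C : Good d) : (TT d).Connected := by
  rw [SimpleGraph.connected_iff]
  refine ⟨?_, inferInstance⟩
  intro u v
  rcases eq_or_ne u v with rfl | huv
  · exact SimpleGraph.Reachable.refl u
  · obtain ⟨w, -⟩ := walk_in_ball C huv
    exact w.reachable

lemma TT_isTree (C : Good d) : (TT d).IsTree := ⟨TT_connected C, TT_acyclic C⟩

noncomputable def Cset (d : X → X → ℝ) [Nonempty X] (x : X) : Set X :=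
  if h : ∃ s, 0 ≤ s ∧ ctr d (cball d x s) = x ∧ ∃ y, y ≠ x ∧ d x y ≤ s then
    cball d x h.choose else {x}

noncomputable def lbl (d : X → X → ℝ) [Nonempty X] (x : X) : ℝ := setDiam d (Cset d x)

lemma setDiam_singleton (hd : IsUltrametricOn d) (x : X) : setDiam d ({x} : Set X) = 0 := by
  have : {r | ∃ a ∈ ({x} : Set X), ∃ b ∈ ({x} : Set X), r = d a b} = {0} := by
    ext r
    simp [d_self hd]
  rw [setDiam, this, csSup_singleton]

lemma Cset_eq (C : Good d) {x : X} {s : ℝ} (hs : 0 ≤ s)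
    (hctr : ctr d (cball d x s) = x) (hmp : ∃ y, y ≠ x ∧ d x y ≤ s) :
    Cset d x = cball d x s := by
  have hex : ∃ s, 0 ≤ s ∧ ctr d (cball d x s) = x ∧ ∃ y, y ≠ x ∧ d x y ≤ s :=
    ⟨s, hs, hctr, hmp⟩
  rw [Cset, dif_pos hex]
  obtain ⟨hs', hctr', y', hy'ne, hy'⟩ := hex.choose_spec
  refine ball_unique C hs' hs (by rw [hctr', hctr]) ?_ ?_
  · exact ⟨y', mem_cball.2 hy', by rw [hctr']; exact hy'ne⟩
  · obtain ⟨y, hyne, hy⟩ := hmp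
    exact ⟨y, mem_cball.2 hy, by rw [hctr]; exact hyne⟩

lemma Cset_spec (C : Good d) (x : X) :
    (Cset d x = {x}) ∨
    (∃ s, 0 ≤ s ∧ Cset d x = cball d x s ∧ ctr d (cball d x s) = x ∧
      ∃ y, y ≠ x ∧ d x y ≤ s) := by
  by_cases h : ∃ s, 0 ≤ s ∧ ctr d (cball d x s) = x ∧ ∃ y, y ≠ x ∧ d x y ≤ s
  · obtain ⟨s, hs, hctr, hmp⟩ := h
    exact Or.inr ⟨s, hs, Cset_eq C hs hctr hmp, hctr, hmp⟩
  · exact Or.inl (by rw [Cset, dif_neg h])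

lemma lbl_nonneg (C : Good d) (x : X) : 0 ≤ lbl d x := by
  rcases Cset_spec C x with h | ⟨s, hs, hCeq, -, -⟩
  · rw [lbl, h, setDiam_singleton C.hd]
  · rw [lbl, hCeq]
    exact setDiam_nonneg C.hd (cball_finite C.hd C.hlf _) ⟨x, self_mem_cball C.hd hs⟩

lemma lbl_le (C : Good d) {x y : X} (h : y ≠ x) : lbl d x ≤ d x y := by
  rcases Cset_spec C x with hC | ⟨s, hs, hCeq, hctr, -⟩
  · rw [lbl, hC, setDiam_singleton C.hd]
    exact C.hd.1 x y
  · by_contra hlt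
    push_neg at hlt
    have hfin := cball_finite C.hd C.hlf (x := x) s
    have hdiam : cball d x s = cball d x (lbl d x) := by
      rw [lbl, hCeq]
      exact cball_eq_diam C.hd hs hfin (self_mem_cball C.hd hs)
    have hy : y ∈ cball d x s := by
      rw [hdiam]
      exact mem_cball.2 (le_of_lt hlt)
    have := ctr_spec (ctrP_ball C x hs) y hy (by rw [hctr]; exact h)
    rw [hctr] at this
    have : d y x = lbl d x := by rw [this, lbl, hCeq]
    rw [C.hd.2.1 y x] at this
    linarith

lemma lbl_par (C : Good d) {x : X} (hx : nonRoot d x) :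
    lbl d (par d x) = setDiam d (Bmin d x) ∧ d x (par d x) = lbl d (par d x) := by
  have hpm : par d x ∈ Bmin d x := par_mem C hx
  have hrec : (Bmin d x : Set X) = cball d (par d x) (mrad d x) := recenter C.hd hpm
  have hCeq : Cset d (par d x) = cball d (par d x) (mrad d x) := by
    refine Cset_eq C (mrad_nonneg C hx) ?_ ⟨x, Ne.symm (par_ne C hx), ?_⟩
    · rw [← hrec]
      exact (par_def hx).symm
    · exact mem_cball.1 (hrec ▸ Bmin_mem C hx)
  have h1 : lbl d (par d x) = setDiam d (Bmin d x) := by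
    rw [lbl, hCeq, ← hrec]
  exact ⟨h1, by rw [h1]; exact d_par C hx⟩

lemma d_le_walkMax (C : Good d) : ∀ {u v : X} (p : (TT d).Walk u v), u ≠ v →
    d u v ≤ walkMax (lbl d) p := by
  intro u v p
  induction p with
  | nil => intro h; exact absurd rfl h
  | @cons u w v h q ih =>
    intro huv
    have hedge : d u w = lbl d u ∨ d u w = lbl d w := by
      rcases adj_dichotomy C h with ⟨hup, -⟩ | ⟨hdn, -⟩
      · right
        have hnu : nonRoot d u := nonRoot_of_par_ne (by rw [hup]; exact h.1.symm)
        have := (lbl_par C hnu).2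
        rwa [hup] at this
      · left
        have hnw : nonRoot d w := nonRoot_of_par_ne (by rw [hdn]; exact h.1)
        have := (lbl_par C hnw).2
        rw [hdn] at this
        rw [C.hd.2.1 u w]
        exact this
    have h1 : d u w ≤ walkMax (lbl d) (SimpleGraph.Walk.cons h q) := by
      rcases hedge with he | he
      · rw [he]
        exact le_walkMax ((SimpleGraph.Walk.cons h q).start_mem_support)
      · rw [he]
        refine le_walkMax ?_
        rw [SimpleGraph.Walk.support_cons]
        exact List.mem_cons_of_mem _ q.start_mem_support
    have h2 : d w v ≤ walkMax (lbl d) (SimpleGraph.Walk.cons h q) := by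
      rcases eq_or_ne w v with rfl | hwv
      · rw [d_self C.hd]
        exact walkMax_nonneg _
      · refine le_trans (ih hwv) ?_
        rw [walkMax_cons]
        exact le_max_right _ _
    exact le_trans (C.hd.2.2.2 u v w) (max_le h1 h2)

lemma exists_path_eq (C : Good d) {u v : X} (huv : u ≠ v) :
    ∃ p : (TT d).Walk u v, p.IsPath ∧ d u v = walkMax (lbl d) p := by
  obtain ⟨w, hw⟩ := walk_in_ball C huv
  refine ⟨w.bypass, w.bypass_isPath, ?_⟩
  refine le_antisymm (d_le_walkMax C _ huv) ?_
  refine walkMax_le (C.hd.1 u v) ?_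
  intro z hz
  have hzB : z ∈ cball d u (d u v) := hw z (SimpleGraph.Walk.support_bypass_subset w hz)
  rcases eq_or_ne z u with rfl | hzu
  · exact lbl_le C (Ne.symm huv)
  · refine le_trans (lbl_le C hzu.symm) ?_
    rw [C.hd.2.1 z u]
    exact mem_cball.1 hzB

lemma generated (C : Good d) : GeneratedBy d (TT d) (lbl d) := by
  refine ⟨TT_isTree C, fun x => lbl_nonneg C x, fun u => d_self C.hd u, ?_⟩
  intro u v huv p hp
  obtain ⟨q, hq, heq⟩ := exists_path_eq C huv
  obtain ⟨p₀, -, huniq⟩ := (TT_isTree C).existsUnique_path u v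
  have hpq : p = q := (huniq p hp).trans (huniq q hq).symm
  rw [hpq]
  exact heq

open SimpleGraph Walk in
lemma one_to_two {X : Type*} {d : X → X → ℝ} (hd : IsUltrametricOn d)
    (hlf : IsLocallyFiniteOn d) (h1 : IsUGVL d) :
    ∀ B : Set X, IsOpenBallOf d B → IsCenteredSphereOf d B := by
  obtain ⟨T, l, hTree, hl, hrefl, hform⟩ := h1
  intro B hB
  obtain ⟨c₀, r₀, hr₀, hBeq⟩ := id hB
  have hfin := hlf B hB
  have hc₀ : c₀ ∈ B := by rw [hBeq]; simpa [Set.mem_setOf_eq, d_self hd] using hr₀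
  by_cases htwo : ∃ a ∈ B, a ≠ c₀
  · obtain ⟨a', ha', ha'ne⟩ := htwo
    have hBne : B.Nonempty := ⟨c₀, hc₀⟩
    obtain ⟨a, ha, b, hb, hD⟩ := setDiam_mem hfin hBne
    set D := setDiam d B with hDdef
    have hDpos : 0 < D := by
      refine lt_of_lt_of_le ?_ (le_setDiam hfin ha' hc₀)
      refine lt_of_le_of_ne (hd.1 a' c₀) ?_
      intro hz
      exact ha'ne ((hd.2.2.1 a' c₀).1 hz.symm)
    have hab : a ≠ b := by
      rintro rfl
      rw [d_self hd] at hD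
      rw [hD] at hDpos
      exact lt_irrefl 0 hDpos
    have hdin : ∀ x ∈ B, ∀ y ∈ B, d x y < r₀ := by
      intro x hx y hy
      rw [hBeq] at hx hy
      refine lt_of_le_of_lt (hd.2.2.2 x y c₀) (max_lt ?_ hy)
      rw [← hd.2.1]
      exact hx
    have hDlt : D < r₀ := by rw [hD]; exact hdin a ha b hb
    obtain ⟨w0⟩ := hTree.isConnected.preconnected a b
    have hppath := w0.bypass_isPath
    have hform_ab : d a b = walkMax l w0.bypass := hform a b hab w0.bypass hppath
    rcases walkMax_attained (l := l) w0.bypass with hzero | ⟨w, hws, hwl⟩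
    · exfalso
      rw [hzero] at hform_ab
      rw [hform_ab] at hD
      rw [hD] at hDpos
      exact lt_irrefl 0 hDpos
    have hlw : l w = D := by rw [← hwl, ← hform_ab, ← hD]
    have hwB : w ∈ B := by
      have haw : d a w < r₀ := by
        rcases eq_or_ne w a with rfl | hwa
        · rw [hd.2.1, d_self hd]; exact hr₀
        · have hq := hppath.takeUntil hws
          have he : d a w = walkMax l (w0.bypass.takeUntil w hws) :=
            hform a w (Ne.symm hwa) _ hq
          have hle : walkMax l (w0.bypass.takeUntil w hws) ≤ walkMax l w0.bypass := by
            refine walkMax_le (walkMax_nonneg _) ?_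
            intro z hz
            exact le_walkMax (Walk.support_takeUntil_subset _ hws hz)
          rw [he]
          refine lt_of_le_of_lt hle ?_
          rw [← hform_ab, ← hD]
          exact hDlt
      rw [hBeq]
      show d c₀ w < r₀
      refine lt_of_le_of_lt (hd.2.2.2 c₀ w a) (max_lt ?_ haw)
      have := ha; rw [hBeq] at this; exact this
    have hspec : ∀ x ∈ B, x ≠ w → d x w = D := by
      intro x hx hxw
      refine le_antisymm (le_setDiam hfin hx hwB) ?_
      obtain ⟨wx⟩ := hTree.isConnected.preconnected x w
      have he := hform x w hxw wx.bypass wx.bypass_isPath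
      rw [he, ← hlw]
      exact le_walkMax (Walk.end_mem_support _)
    refine ⟨w, hwB, D, le_of_lt hDpos, ?_⟩
    ext z
    constructor
    · intro hz
      rcases eq_or_ne z w with rfl | hzw
      · exact Or.inr rfl
      · exact Or.inl (hspec z hz hzw)
    · rintro (hz | hz)
      · have hz' : d z w = D := hz
        rw [hBeq]
        show d c₀ z < r₀
        have hcw : d c₀ w < r₀ := by have := hwB; rw [hBeq] at this; exact this
        refine lt_of_le_of_lt (hd.2.2.2 c₀ z w) (max_lt hcw ?_)
        rw [hd.2.1 w z, hz']
        exact hDlt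
      · rw [Set.mem_singleton_iff] at hz
        subst hz
        exact hwB
  · push_neg at htwo
    have hBsing : B = {c₀} := by
      ext z
      constructor
      · intro hz; exact htwo z hz
      · intro hz; rw [Set.mem_singleton_iff] at hz; subst hz; exact hc₀
    refine ⟨c₀, hc₀, 0, le_refl 0, ?_⟩
    rw [hBsing]
    ext z
    simp only [Set.mem_union, Set.mem_setOf_eq, Set.mem_singleton_iff]
    constructor
    · intro hz; exact Or.inr hz
    · rintro (hz | hz)
      · exact (hd.2.2.1 z c₀).1 hz
      · exact hz

end Stmt14



/-- For a nonempty locally finite ultrametric space `(X, d)` the following are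
equivalent: (1) `(X, d) ∈ UGVL`; (2) every open ball is a centered sphere; (3) every
open ball `B` with at least two points has a point `c ∈ B` with `d x c = diam B` for
all `x ∈ B` with `x ≠ c`. -/
theorem stmt_14 {X : Type*} (hne : Nonempty X)
    (d : X → X → ℝ) (hd : IsUltrametricOn d) (hlf : IsLocallyFiniteOn d) :
    (IsUGVL d ↔ ∀ B : Set X, IsOpenBallOf d B → IsCenteredSphereOf d B) ∧
    ((∀ B : Set X, IsOpenBallOf d B → IsCenteredSphereOf d B) ↔
      (∀ B : Set X, IsOpenBallOf d B → (∃ a ∈ B, ∃ b ∈ B, a ≠ b) →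
        ∃ c ∈ B, ∀ x ∈ B, x ≠ c → d x c = setDiam d B)) := by
  haveI := hne
  constructor
  · constructor
    · exact fun h1 => Stmt14.one_to_two hd hlf h1
    · intro h2
      have C : Stmt14.Good d := ⟨hd, hlf, two_to_three hd hlf h2⟩
      exact ⟨Stmt14.TT d, Stmt14.lbl d, Stmt14.generated C⟩
  · exact ⟨two_to_three hd hlf, three_to_two hd hlf⟩
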